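/- Let Z be a topological space with underlying set X ⊔ Y such that X is open in Z and both X and Y carry the subspace topologies. Define f : Closed(X) → Closed(Y) by f(A) = Cl_Z(A) ∩ Y. Then f is admissible and the topology of Z coincides with that of X +_f Y. -/
import Mathlib


open Set Topology

variable {X Y : Type*} [TopologicalSpace X] [TopologicalSpace Y]

/-- A map on subsets is *admissible* if it sends closed sets to closed sets,
the empty set to the empty set, and is finitely additive on closed sets. -/
def Admissible (f : Set X → Set Y) : Prop :=
  (∀ A : Set X, IsClosed A → IsClosed (f A)) ∧ f ∅ = ∅ ∧
    ∀ A B : Set X, IsClosed A → IsClosed B → f (A ∪ B) = f A ∪ f B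

/-- The defining condition for a subset of `X ⊕ Y` to be closed in the sum space `X +_f Y`. -/
def SumClosed (f : Set X → Set Y) (A : Set (X ⊕ Y)) : Prop :=
  IsClosed (Sum.inl ⁻¹' A) ∧ IsClosed (Sum.inr ⁻¹' A) ∧
    f (Sum.inl ⁻¹' A) ⊆ Sum.inr ⁻¹' A

theorem Admissible.mono {f : Set X → Set Y} (hf : Admissible f) {A B : Set X}
    (hA : IsClosed A) (hB : IsClosed B) (hAB : A ⊆ B) : f A ⊆ f B := by
  have h := hf.2.2 A B hA hB
  rw [union_eq_right.mpr hAB] at h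
  rw [h]; exact subset_union_left

/-- The sum space `X +_f Y`. -/
def sumTopology (f : Set X → Set Y) (hf : Admissible f) : TopologicalSpace (X ⊕ Y) where
  IsOpen s := SumClosed f sᶜ
  isOpen_univ := by
    refine ⟨?_, ?_, ?_⟩ <;> simp [hf.2.1]
  isOpen_inter := by
    rintro s t ⟨hs1, hs2, hs3⟩ ⟨ht1, ht2, ht3⟩
    refine ⟨?_, ?_, ?_⟩
    · simpa [compl_inter, preimage_union] using hs1.union ht1
    · simpa [compl_inter, preimage_union] using hs2.union ht2
    · rw [compl_inter, preimage_union, preimage_union, hf.2.2 _ _ hs1 ht1]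
      exact union_subset_union hs3 ht3
  isOpen_sUnion := by
    intro S hS
    have hc : (⋃₀ S)ᶜ = ⋂ s ∈ S, sᶜ := by
      rw [compl_sUnion, sInter_image]
    have h1 : IsClosed (Sum.inl ⁻¹' (⋃₀ S)ᶜ) := by
      rw [hc, preimage_iInter₂]
      exact isClosed_biInter fun s hs => (hS s hs).1
    have h2 : IsClosed (Sum.inr ⁻¹' (⋃₀ S)ᶜ) := by
      rw [hc, preimage_iInter₂]
      exact isClosed_biInter fun s hs => (hS s hs).2.1
    refine ⟨h1, h2, ?_⟩
    rw [hc, preimage_iInter₂, preimage_iInter₂]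
    refine subset_iInter₂ fun s hs => ?_
    have h1' : IsClosed (⋂ i ∈ S, Sum.inl ⁻¹' iᶜ) := by
      exact isClosed_biInter fun i hi => (hS i hi).1
    calc f (⋂ i ∈ S, Sum.inl ⁻¹' iᶜ) ⊆ f (Sum.inl ⁻¹' sᶜ) :=
          hf.mono h1' (hS s hs).1 (iInter₂_subset s hs)
      _ ⊆ Sum.inr ⁻¹' sᶜ := (hS s hs).2.2

theorem isClosed_sumTopology {f : Set X → Set Y} (hf : Admissible f) (A : Set (X ⊕ Y)) :
    IsClosed[sumTopology f hf] A ↔ SumClosed f A := by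
  rw [← @isOpen_compl_iff _ _ (sumTopology f hf)]
  show SumClosed f Aᶜᶜ ↔ _
  rw [compl_compl]

/-- if `Z` is a topology on `X ⊕ Y` in which `X` is open and `X`, `Y`
carry the subspace topologies, then `f A := Cl_Z(A) ∩ Y` is admissible and the
topology of `Z` coincides with that of `X +_f Y`. -/
theorem statement4 (t : TopologicalSpace (X ⊕ Y))
    (hopen : IsOpen[t] (Set.range Sum.inl))
    (hX : TopologicalSpace.induced Sum.inl t = (inferInstance : TopologicalSpace X))
    (hY : TopologicalSpace.induced Sum.inr t = (inferInstance : TopologicalSpace Y))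
    (f : Set X → Set Y)
    (hfdef : ∀ A : Set X, f A = Sum.inr ⁻¹' (@closure _ t (Sum.inl '' A))) :
    Admissible f ∧ ∀ s : Set (X ⊕ Y), IsOpen[t] s ↔ SumClosed f sᶜ := by
  letI := t
  have hcont_inl : Continuous (Sum.inl : X → X ⊕ Y) :=
    continuous_iff_le_induced.mpr hX.ge
  have hcont_inr : Continuous (Sum.inr : Y → X ⊕ Y) :=
    continuous_iff_le_induced.mpr hY.ge
  have hemb : IsEmbedding (Sum.inl : X → X ⊕ Y) :=
    ⟨⟨hX.symm⟩, Sum.inl_injective⟩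
  have hpre : ∀ A : Set X, IsClosed A →
      Sum.inl ⁻¹' (closure (Sum.inl '' A : Set (X ⊕ Y))) = A := by
    intro A hA
    rw [← hemb.closure_eq_preimage_closure_image, hA.closure_eq]
  have hadm : Admissible f := by
    refine ⟨fun A hA => ?_, ?_, fun A B hA hB => ?_⟩
    · rw [hfdef]
      exact isClosed_closure.preimage hcont_inr
    · simp [hfdef]
    · simp only [hfdef, image_union, closure_union, preimage_union]
  refine ⟨hadm, fun s => ?_⟩
  constructor
  · intro hs
    have hA : IsClosed sᶜ := isClosed_compl_iff.mpr hs
    refine ⟨hA.preimage hcont_inl, hA.preimage hcont_inr, ?_⟩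
    rw [hfdef]
    refine preimage_mono ?_
    calc closure (Sum.inl '' (Sum.inl ⁻¹' sᶜ))
        ⊆ closure sᶜ := closure_mono (image_preimage_subset _ _)
      _ = sᶜ := hA.closure_eq
  · rintro ⟨h1, h2, h3⟩
    rw [← isClosed_compl_iff]
    refine isClosed_of_closure_subset ?_
    have hdecomp : sᶜ = Sum.inl '' (Sum.inl ⁻¹' sᶜ) ∪ Sum.inr '' (Sum.inr ⁻¹' sᶜ) := by
      ext z; cases z <;> simp
    rw [hdecomp, closure_union]
    refine union_subset ?_ ?_
    · rintro z hz
      rw [← hdecomp]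
      cases z with
      | inl x =>
        have : x ∈ Sum.inl ⁻¹' (closure (Sum.inl '' (Sum.inl ⁻¹' sᶜ))) := hz
        rw [hpre _ h1] at this
        exact this
      | inr y =>
        have : y ∈ f (Sum.inl ⁻¹' sᶜ) := by rw [hfdef]; exact hz
        exact h3 this
    · have h2' : IsClosed[TopologicalSpace.induced Sum.inr t] (Sum.inr ⁻¹' sᶜ) := by
        rw [hY]; exact h2
      obtain ⟨C, hC, hCeq⟩ := isClosed_induced_iff.mp h2'
      have hrange : IsClosed (Set.range (Sum.inr : Y → X ⊕ Y)) := by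
        rw [← Set.compl_range_inl]
        exact isClosed_compl_iff.mpr hopen
      have hsub : closure (Sum.inr '' (Sum.inr ⁻¹' sᶜ)) ⊆ C ∩ Set.range Sum.inr := by
        refine closure_minimal ?_ (hC.inter hrange)
        rw [← hCeq]
        exact subset_inter (image_preimage_subset _ _) (image_subset_range _ _)
      intro z hz
      obtain ⟨hzC, y, rfl⟩ := hsub hz
      rw [← hdecomp]
      have : y ∈ Sum.inr ⁻¹' C := hzC
      rw [hCeq] at this
      exact this
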